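/- Let Z be a Poisson binomial random variable with parameters α_1,...,α_m ∈ [0,1] and let Z' be a binomial random variable with parameters m and ᾱ = (1/m)Σ_i α_i. Then E[1/(1+Z)] ≤ E[1/(1+Z')]. -/

import Mathlib

open Finset

/-- AM-GM: product of nonnegatives ≤ (average)^m. -/
lemma amgm_prod_le_avg_pow (m : ℕ) (hm : m ≠ 0) (z : Fin m → ℝ) (hz : ∀ i, 0 ≤ z i) :
    ∏ i, z i ≤ ((∑ i, z i) / m) ^ m := by
  have hmpos : (0:ℝ) < m := by positivity
  have h := Real.geom_mean_le_arith_mean_weighted Finset.univ (fun _ => 1 / (m:ℝ)) z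
    (fun i _ => by positivity)
    (by simp [Finset.sum_const, Finset.card_univ]; field_simp)
    (fun i _ => hz i)
  have hL : ∀ i : Fin m, (z i ^ ((1:ℝ)/m)) ^ m = z i := by
    intro i
    rw [← Real.rpow_natCast (z i ^ ((1:ℝ)/m)) m, ← Real.rpow_mul (hz i)]
    field_simp
    simp
  calc ∏ i, z i = ∏ i, (z i ^ ((1:ℝ)/m)) ^ m := by
        simp only [hL]
    _ = (∏ i, z i ^ ((1:ℝ)/m)) ^ m := by rw [Finset.prod_pow]
    _ ≤ (∑ i, (1/(m:ℝ)) * z i) ^ m := by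
        apply pow_le_pow_left₀ _ h
        exact Finset.prod_nonneg fun i _ => Real.rpow_nonneg (hz i) _
    _ = ((∑ i, z i) / m) ^ m := by rw [← Finset.mul_sum]; ring_nf

/-- The Poisson binomial Z with parameters α₁,…,α_m satisfies
E[1/(1+Z)] ≤ E[1/(1+Z')] where Z' is binomial with parameters m and
ᾱ = (1/m)Σᵢαᵢ. The binomial expectation is written out via its pmf. -/
theorem poisson_binomial_vs_binomial (m : ℕ) (hm : 1 ≤ m) (α : Fin m → ℝ)
    (hα : ∀ i, α i ∈ Set.Icc (0:ℝ) 1)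
    (w : (Fin m → Bool) → ℝ)
    (hw : w = fun ω => ∏ i, (if ω i then α i else 1 - α i))
    (Z : (Fin m → Bool) → ℝ)
    (hZ : Z = fun ω => ∑ i, (if ω i then (1:ℝ) else 0))
    (abar : ℝ) (hmean : abar = (1 / (m:ℝ)) * ∑ i, α i) :
    ∑ ω, w ω * (1 / (1 + Z ω))
      ≤ ∑ i ∈ Finset.range (m + 1),
          (m.choose i : ℝ) * abar ^ i * (1 - abar) ^ (m - i) * (1 / (1 + (i:ℝ))) := by
  have hm0 : (m:ℝ) ≠ 0 := by positivity
  -- the integer count of successes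
  set k : (Fin m → Bool) → ℕ := fun ω => ∑ i, (if ω i then 1 else 0) with hk
  have hZk : ∀ ω, Z ω = (k ω : ℝ) := by
    intro ω; rw [hZ, hk]; push_cast; simp
  -- Step 1: LHS equals ∫ t in 0..1, ∏ i (α i * t + (1 - α i))
  have hint1 : ∀ n : ℕ, ∫ t in (0:ℝ)..1, t ^ n = 1 / (1 + (n:ℝ)) := by
    intro n
    rw [integral_pow]
    simp [add_comm (1:ℝ)]
  have hLHS : ∑ ω, w ω * (1 / (1 + Z ω))
      = ∫ t in (0:ℝ)..1, ∏ i, (α i * t + (1 - α i)) := by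
    have h1 : ∀ ω : Fin m → Bool, w ω * (1 / (1 + Z ω))
        = ∫ t in (0:ℝ)..1, w ω * t ^ (k ω) := by
      intro ω
      rw [intervalIntegral.integral_const_mul, hint1, hZk]
    rw [Finset.sum_congr rfl fun ω _ => h1 ω]
    rw [← intervalIntegral.integral_finset_sum]
    · apply intervalIntegral.integral_congr
      intro t _
      simp only
      have h2 : ∀ ω : Fin m → Bool, w ω * t ^ (k ω)
          = ∏ i, (if ω i then α i * t else 1 - α i) := by
        intro ω
        rw [hw, hk]
        rw [← Finset.prod_pow_eq_pow_sum, ← Finset.prod_mul_distrib]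
        congr 1; ext i
        by_cases h : ω i <;> simp [h]
      rw [Finset.sum_congr rfl fun ω _ => h2 ω]
      rw [← Fintype.prod_sum fun (i : Fin m) (b : Bool) => if b = true then α i * t else 1 - α i]
      apply Finset.prod_congr rfl
      intro i _
      rw [Fintype.sum_bool]
      simp [add_comm]
    · intro ω _
      exact (Continuous.intervalIntegrable (by continuity) _ _)
  -- Step 2: RHS equals ∫ t in 0..1, (abar * t + (1 - abar))^m
  have hRHS : (∑ i ∈ Finset.range (m + 1),
        (m.choose i : ℝ) * abar ^ i * (1 - abar) ^ (m - i) * (1 / (1 + (i:ℝ))))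
      = ∫ t in (0:ℝ)..1, (abar * t + (1 - abar)) ^ m := by
    have hexp : ∀ t : ℝ, (abar * t + (1 - abar)) ^ m
        = ∑ i ∈ Finset.range (m + 1),
            (m.choose i : ℝ) * abar ^ i * (1 - abar) ^ (m - i) * t ^ i := by
      intro t
      rw [add_pow]
      apply Finset.sum_congr rfl
      intro i _
      rw [mul_pow]
      ring
    rw [intervalIntegral.integral_congr (g := fun t => ∑ i ∈ Finset.range (m+1),
        (m.choose i : ℝ) * abar ^ i * (1 - abar) ^ (m - i) * t ^ i)
        (fun t _ => hexp t)]
    rw [intervalIntegral.integral_finset_sum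
        (fun i _ => (Continuous.intervalIntegrable (by continuity) _ _))]
    apply Finset.sum_congr rfl
    intro i _
    rw [intervalIntegral.integral_const_mul, hint1]
  rw [hLHS, hRHS]
  -- Step 3: pointwise inequality via AM-GM
  apply intervalIntegral.integral_mono_on zero_le_one
  · exact (Continuous.intervalIntegrable (by continuity) _ _)
  · exact (Continuous.intervalIntegrable (by continuity) _ _)
  · intro t ht
    obtain ⟨ht0, ht1⟩ := ht
    have hz : ∀ i : Fin m, 0 ≤ α i * t + (1 - α i) := by
      intro i
      obtain ⟨h0, h1⟩ := hα i
      nlinarith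
    have hsum : (∑ i, (α i * t + (1 - α i))) / m = abar * t + (1 - abar) := by
      rw [hmean, Finset.sum_add_distrib, ← Finset.sum_mul, Finset.sum_sub_distrib]
      simp only [Finset.sum_const, Finset.card_univ, Fintype.card_fin, nsmul_eq_mul, mul_one]
      field_simp
    have := amgm_prod_le_avg_pow m (by omega) (fun i => α i * t + (1 - α i)) hz
    rwa [hsum] at this
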